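/- Let G ⊆ ℂ×ℂ be open and let φ₁, φ₂ : ℂ×ℂ → ℂ be ℂ-differentiable on G and satisfy the bicomplex Cauchy–Riemann equations on G. Define iterated a-derivatives by φₖ⁽⁰⁾ = φₖ and φₖ⁽ⁿ⁺¹⁾(p) = ∂φₖ⁽ⁿ⁾/∂a (p). Then for every natural number n, the functions φ₁⁽ⁿ⁾ and φ₂⁽ⁿ⁾ are ℂ-differentiable on G and satisfy the bicomplex Cauchy–Riemann equations on G. (A holomorphic bicomplex function possesses derivatives of all orders, each of them holomorphic.) -/

import Mathlib

/-- The partial derivative operator with respect to the first (complex) variable. -/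
noncomputable def Da (φ : ℂ × ℂ → ℂ) : ℂ × ℂ → ℂ := fun p => fderiv ℂ φ p (1, 0)

open Complex Metric

/-- If ψ is differentiable on open `G` and its derivative kills the direction `(τ,1)`,
then ψ is analytic at each point of `G`. -/
lemma analyticAt_of_dir_deriv_zero (G : Set (ℂ × ℂ)) (hG : IsOpen G) (ψ : ℂ × ℂ → ℂ) (τ : ℂ)
    (hd : ∀ q ∈ G, DifferentiableAt ℂ ψ q)
    (h0 : ∀ q ∈ G, fderiv ℂ ψ q (τ, 1) = 0) :
    ∀ p ∈ G, AnalyticAt ℂ ψ p := by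
  intro p hp
  obtain ⟨ε, hε, hball⟩ := Metric.isOpen_iff.1 hG p hp
  -- constancy along direction (τ,1) within the ball
  have hconst : ∀ q ∈ ball p ε, ∀ t : ℂ, q + t • ((τ, 1) : ℂ × ℂ) ∈ ball p ε →
      ψ (q + t • ((τ, 1) : ℂ × ℂ)) = ψ q := by
    intro q hq t hq'
    set w : ℂ × ℂ := t • ((τ, 1) : ℂ × ℂ) with hw
    have hmem : ∀ u : ℝ, u ∈ Set.Icc (0 : ℝ) 1 → q + u • w ∈ ball p ε := by
      intro u hu
      have h1 : q + u • w = (1 - u) • q + u • (q + w) := by module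
      rw [h1]
      exact (convex_ball p ε) hq hq' (by linarith [hu.2]) hu.1 (by ring)
    have hder : ∀ u : ℝ, u ∈ Set.Icc (0 : ℝ) 1 →
        HasDerivAt (fun u : ℝ => ψ (q + u • w)) 0 u := by
      intro u hu
      have hm : HasDerivAt (fun u : ℝ => q + u • w) w u := by
        simpa using ((hasDerivAt_id u).smul_const w).const_add q
      have hpt : q + u • w ∈ G := hball (hmem u hu)
      have hψ : HasFDerivAt ψ (fderiv ℂ ψ (q + u • w)) (q + u • w) :=
        (hd _ hpt).hasFDerivAt
      have hz : fderiv ℂ ψ (q + u • w) w = 0 := by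
        rw [hw, map_smul, h0 _ hpt, smul_zero]
      have := (hψ.restrictScalars ℝ).comp_hasDerivAt u hm
      have h3 : HasDerivAt (ψ ∘ fun u : ℝ => q + u • w) 0 u := by simpa [hz] using this
      exact h3
    have := constant_of_has_deriv_right_zero
      (f := fun u : ℝ => ψ (q + u • w))
      (fun u hu => (hder u hu).continuousAt.continuousWithinAt)
      (fun u hu => ((hder u (Set.Ico_subset_Icc_self hu)).hasDerivWithinAt)) 1
      (by norm_num)
    simpa using this
  -- one-variable function
  set k : ℂ → ℂ := fun z => ψ (p + (z, 0)) with hk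
  have hmemk : ∀ z : ℂ, z ∈ ball (0 : ℂ) ε → p + (z, 0) ∈ ball p ε := by
    intro z hz
    simp only [mem_ball, dist_eq_norm] at hz ⊢
    simpa [Prod.norm_def] using hz
  have hkd : DifferentiableOn ℂ k (ball (0 : ℂ) ε) := by
    intro z hz
    have hin : HasFDerivAt (fun z : ℂ => p + (z, 0))
        (ContinuousLinearMap.inl ℂ ℂ ℂ) z := by
      simpa using (ContinuousLinearMap.inl ℂ ℂ ℂ).hasFDerivAt.const_add p
    have := ((hd _ (hball (hmemk z hz))).hasFDerivAt.comp z hin)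
    exact this.differentiableAt.differentiableWithinAt
  have hk0 : AnalyticAt ℂ k 0 := hkd.analyticAt (ball_mem_nhds _ hε)
  -- the linear factor
  set L : ℂ × ℂ → ℂ := fun q => q.1 + (p.2 - q.2) * τ - p.1 with hL
  have hLa : AnalyticAt ℂ L p :=
    ((analyticAt_fst.add ((analyticAt_const.sub analyticAt_snd).mul analyticAt_const)).sub
      analyticAt_const)
  have hLp : L p = 0 := by simp [hL]
  have hcomp : AnalyticAt ℂ (fun q => k (L q)) p := by
    have hk0' : AnalyticAt ℂ k (L p) := hLp ▸ hk0
    exact hk0'.comp hLa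
  -- eventual equality
  set δ : ℝ := ε / (‖τ‖ + 2) with hδ
  have hδ0 : 0 < δ := div_pos hε (by positivity)
  have hEq : (fun q => k (L q)) =ᶠ[nhds p] ψ := by
    have hb : ball p δ ∈ nhds p := ball_mem_nhds _ hδ0
    filter_upwards [hb] with q hq
    have hq1 : ‖q.1 - p.1‖ < δ := by
      have := hq
      rw [mem_ball, Prod.dist_eq] at this
      have := lt_of_le_of_lt (le_max_left _ _) this
      simpa [dist_eq_norm] using this
    have hq2 : ‖q.2 - p.2‖ < δ := by
      have := hq
      rw [mem_ball, Prod.dist_eq] at this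
      have := lt_of_le_of_lt (le_max_right _ _) this
      simpa [dist_eq_norm] using this
    have hqball : q ∈ ball p ε := by
      have : δ ≤ ε := by
        rw [hδ]
        rw [div_le_iff₀ (by positivity)]
        nlinarith [norm_nonneg τ]
      exact ball_subset_ball this hq
    have hLbound : ‖L q‖ < ε := by
      have h1 : ‖L q‖ ≤ ‖q.1 - p.1‖ + ‖q.2 - p.2‖ * ‖τ‖ := by
        have : L q = (q.1 - p.1) + (p.2 - q.2) * τ := by rw [hL]; ring
        rw [this]
        calc ‖(q.1 - p.1) + (p.2 - q.2) * τ‖ ≤ ‖q.1 - p.1‖ + ‖(p.2 - q.2) * τ‖ :=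
              norm_add_le _ _
          _ = ‖q.1 - p.1‖ + ‖p.2 - q.2‖ * ‖τ‖ := by rw [norm_mul]
          _ = ‖q.1 - p.1‖ + ‖q.2 - p.2‖ * ‖τ‖ := by rw [norm_sub_rev (p.2)]
      have h2 : ‖q.1 - p.1‖ + ‖q.2 - p.2‖ * ‖τ‖ < δ + δ * ‖τ‖ := by
        have := mul_le_mul_of_nonneg_right hq2.le (norm_nonneg τ)
        nlinarith [norm_nonneg τ, hq2, hq1]
      have h3 : δ + δ * ‖τ‖ < ε := by
        have hne : (‖τ‖ + 2) ≠ 0 := by positivity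
        have hmul : δ * (‖τ‖ + 2) = ε := div_mul_cancel₀ _ hne
        nlinarith [hδ0]
      linarith
    -- the shifted point
    have hpt : p + ((L q, 0) : ℂ × ℂ) ∈ ball p ε := by
      simp only [mem_ball, dist_eq_norm]
      simpa [Prod.norm_def] using hLbound
    have hrepr : p + ((L q, 0) : ℂ × ℂ) = q + (p.2 - q.2) • ((τ, 1) : ℂ × ℂ) := by
      rw [hL]
      apply Prod.ext <;> simp <;> ring
    have := hconst q hqball (p.2 - q.2) (by rw [← hrepr]; exact hpt)
    rw [← hrepr] at this
    exact this
  exact hcomp.congr hEq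

lemma vec_decomp (τ : ℂ) : ((τ, 1) : ℂ × ℂ) = τ • ((1, 0) : ℂ × ℂ) + (0, 1) := by
  simp [Prod.ext_iff]

lemma analyticAt_of_CR (G : Set (ℂ × ℂ)) (hG : IsOpen G) (φ₁ φ₂ : ℂ × ℂ → ℂ)
    (hd₁ : ∀ p ∈ G, DifferentiableAt ℂ φ₁ p)
    (hd₂ : ∀ p ∈ G, DifferentiableAt ℂ φ₂ p)
    (hcr₁ : ∀ p ∈ G, fderiv ℂ φ₁ p (1, 0) = fderiv ℂ φ₂ p (0, 1))
    (hcr₂ : ∀ p ∈ G, fderiv ℂ φ₂ p (1, 0) = -fderiv ℂ φ₁ p (0, 1)) :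
    ∀ p ∈ G, AnalyticAt ℂ φ₁ p ∧ AnalyticAt ℂ φ₂ p := by
  set ψp : ℂ × ℂ → ℂ := fun q => φ₁ q + Complex.I * φ₂ q with hψp
  set ψm : ℂ × ℂ → ℂ := fun q => φ₁ q - Complex.I * φ₂ q with hψm
  have hdp : ∀ q ∈ G, DifferentiableAt ℂ ψp q := fun q hq =>
    (hd₁ q hq).add ((hd₂ q hq).const_mul _)
  have hdm : ∀ q ∈ G, DifferentiableAt ℂ ψm q := fun q hq =>
    (hd₁ q hq).sub ((hd₂ q hq).const_mul _)
  have hfp : ∀ q ∈ G, ∀ v, fderiv ℂ ψp q v = fderiv ℂ φ₁ q v + Complex.I * fderiv ℂ φ₂ q v := by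
    intro q hq v
    have h := ((hd₁ q hq).hasFDerivAt.add (((hd₂ q hq).hasFDerivAt.const_mul Complex.I))).fderiv
    rw [hψp]
    rw [show (fun q => φ₁ q + Complex.I * φ₂ q) = (φ₁ + fun y => Complex.I * φ₂ y) from rfl, h]; rfl
  have hfm : ∀ q ∈ G, ∀ v, fderiv ℂ ψm q v = fderiv ℂ φ₁ q v - Complex.I * fderiv ℂ φ₂ q v := by
    intro q hq v
    have h := ((hd₁ q hq).hasFDerivAt.sub (((hd₂ q hq).hasFDerivAt.const_mul Complex.I))).fderiv
    rw [hψm]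
    rw [show (fun q => φ₁ q - Complex.I * φ₂ q) = (φ₁ - fun y => Complex.I * φ₂ y) from rfl, h]; rfl
  -- derivative in a given direction via the basis
  have heval : ∀ (φ : ℂ × ℂ → ℂ) (q : ℂ × ℂ) (τ : ℂ),
      fderiv ℂ φ q (τ, 1) = τ * fderiv ℂ φ q (1, 0) + fderiv ℂ φ q (0, 1) := by
    intro φ q τ
    rw [vec_decomp τ, map_add, map_smul, smul_eq_mul]
  have h0p : ∀ q ∈ G, fderiv ℂ ψp q (-Complex.I, 1) = 0 := by
    intro q hq
    rw [hfp q hq, heval φ₁, heval φ₂, hcr₁ q hq, hcr₂ q hq]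
    ring_nf
    simp [Complex.I_sq]
  have h0m : ∀ q ∈ G, fderiv ℂ ψm q (Complex.I, 1) = 0 := by
    intro q hq
    rw [hfm q hq, heval φ₁, heval φ₂, hcr₁ q hq, hcr₂ q hq]
    ring_nf
    simp [Complex.I_sq]
  have hap := analyticAt_of_dir_deriv_zero G hG ψp (-Complex.I) hdp h0p
  have ham := analyticAt_of_dir_deriv_zero G hG ψm (Complex.I) hdm h0m
  intro p hp
  have h1 : φ₁ = fun q => (ψp q + ψm q) / 2 := by
    funext q; rw [hψp, hψm]; ring
  have h2 : φ₂ = fun q => (ψp q - ψm q) / (2 * Complex.I) := by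
    funext q; rw [hψp, hψm]
    field_simp
    ring
  constructor
  · rw [h1]
    exact ((hap p hp).add (ham p hp)).div analyticAt_const (by norm_num)
  · rw [h2]
    exact ((hap p hp).sub (ham p hp)).div analyticAt_const (by simp [Complex.I_ne_zero])

lemma CR_step (G : Set (ℂ × ℂ)) (hG : IsOpen G) (φ₁ φ₂ : ℂ × ℂ → ℂ)
    (hd₁ : ∀ p ∈ G, DifferentiableAt ℂ φ₁ p)
    (hd₂ : ∀ p ∈ G, DifferentiableAt ℂ φ₂ p)
    (hcr₁ : ∀ p ∈ G, fderiv ℂ φ₁ p (1, 0) = fderiv ℂ φ₂ p (0, 1))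
    (hcr₂ : ∀ p ∈ G, fderiv ℂ φ₂ p (1, 0) = -fderiv ℂ φ₁ p (0, 1)) :
    (∀ p ∈ G, DifferentiableAt ℂ (Da φ₁) p) ∧ (∀ p ∈ G, DifferentiableAt ℂ (Da φ₂) p) ∧
    (∀ p ∈ G, fderiv ℂ (Da φ₁) p (1, 0) = fderiv ℂ (Da φ₂) p (0, 1)) ∧
    (∀ p ∈ G, fderiv ℂ (Da φ₂) p (1, 0) = -fderiv ℂ (Da φ₁) p (0, 1)) := by
  have hA := analyticAt_of_CR G hG φ₁ φ₂ hd₁ hd₂ hcr₁ hcr₂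
  have hA₁ : AnalyticOnNhd ℂ φ₁ G := fun p hp => (hA p hp).1
  have hA₂ : AnalyticOnNhd ℂ φ₂ G := fun p hp => (hA p hp).2
  have hfd₁ : ∀ p ∈ G, DifferentiableAt ℂ (fderiv ℂ φ₁) p := fun p hp =>
    (hA₁.fderiv p hp).differentiableAt
  have hfd₂ : ∀ p ∈ G, DifferentiableAt ℂ (fderiv ℂ φ₂) p := fun p hp =>
    (hA₂.fderiv p hp).differentiableAt
  -- derivative of directional derivatives
  have hDer : ∀ (φ : ℂ × ℂ → ℂ) (p : ℂ × ℂ), p ∈ G → DifferentiableAt ℂ (fderiv ℂ φ) p →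
      ∀ v : ℂ × ℂ, HasFDerivAt (fun q => fderiv ℂ φ q v)
        ((ContinuousLinearMap.apply ℂ ℂ v).comp (fderiv ℂ (fderiv ℂ φ) p)) p := by
    intro φ p hp hfd v
    exact ((ContinuousLinearMap.apply ℂ ℂ v).hasFDerivAt).comp p hfd.hasFDerivAt
  have hdDa₁ : ∀ p ∈ G, DifferentiableAt ℂ (Da φ₁) p := fun p hp =>
    (hDer φ₁ p hp (hfd₁ p hp) (1, 0)).differentiableAt
  have hdDa₂ : ∀ p ∈ G, DifferentiableAt ℂ (Da φ₂) p := fun p hp =>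
    (hDer φ₂ p hp (hfd₂ p hp) (1, 0)).differentiableAt
  refine ⟨hdDa₁, hdDa₂, ?_, ?_⟩
  · -- first CR equation for Da
    intro p hp
    have hGnhds : G ∈ nhds p := hG.mem_nhds hp
    -- symmetry of second derivative of φ₂
    have hsymm : ∀ v w : ℂ × ℂ,
        fderiv ℂ (fderiv ℂ φ₂) p v w = fderiv ℂ (fderiv ℂ φ₂) p w v := by
      intro v w
      refine second_derivative_symmetric_of_eventually (f := φ₂) ?_ (hfd₂ p hp).hasFDerivAt v w
      filter_upwards [hGnhds] with q hq using (hd₂ q hq).hasFDerivAt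
    have hE1 : Da φ₁ =ᶠ[nhds p] fun q => fderiv ℂ φ₂ q (0, 1) := by
      filter_upwards [hGnhds] with q hq using hcr₁ q hq
    have lhs : fderiv ℂ (Da φ₁) p (1, 0) = fderiv ℂ (fderiv ℂ φ₂) p (1, 0) (0, 1) := by
      rw [hE1.fderiv_eq, (hDer φ₂ p hp (hfd₂ p hp) (0, 1)).fderiv]; rfl
    have rhs : fderiv ℂ (Da φ₂) p (0, 1) = fderiv ℂ (fderiv ℂ φ₂) p (0, 1) (1, 0) := by
      rw [show Da φ₂ = fun q => fderiv ℂ φ₂ q (1, 0) from rfl,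
        (hDer φ₂ p hp (hfd₂ p hp) (1, 0)).fderiv]; rfl
    rw [lhs, rhs, hsymm]
  · -- second CR equation for Da
    intro p hp
    have hGnhds : G ∈ nhds p := hG.mem_nhds hp
    have hsymm : ∀ v w : ℂ × ℂ,
        fderiv ℂ (fderiv ℂ φ₁) p v w = fderiv ℂ (fderiv ℂ φ₁) p w v := by
      intro v w
      refine second_derivative_symmetric_of_eventually (f := φ₁) ?_ (hfd₁ p hp).hasFDerivAt v w
      filter_upwards [hGnhds] with q hq using (hd₁ q hq).hasFDerivAt
    have hE2 : Da φ₂ =ᶠ[nhds p] fun q => -(fderiv ℂ φ₁ q (0, 1)) := by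
      filter_upwards [hGnhds] with q hq using hcr₂ q hq
    have lhs : fderiv ℂ (Da φ₂) p (1, 0) = -(fderiv ℂ (fderiv ℂ φ₁) p (1, 0) (0, 1)) := by
      rw [hE2.fderiv_eq, show (fun q => -(fderiv ℂ φ₁ q (0, 1))) = -(fun q => fderiv ℂ φ₁ q (0, 1)) from rfl,
        (hDer φ₁ p hp (hfd₁ p hp) (0, 1)).neg.fderiv]; rfl
    have rhs : fderiv ℂ (Da φ₁) p (0, 1) = fderiv ℂ (fderiv ℂ φ₁) p (0, 1) (1, 0) := by
      rw [show Da φ₁ = fun q => fderiv ℂ φ₁ q (1, 0) from rfl,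
        (hDer φ₁ p hp (hfd₁ p hp) (1, 0)).fderiv]; rfl
    rw [lhs, rhs, hsymm]

theorem bicomplex_holomorphic_has_all_derivatives (G : Set (ℂ × ℂ)) (hG : IsOpen G)
    (φ₁ φ₂ : ℂ × ℂ → ℂ)
    (hd₁ : ∀ p ∈ G, DifferentiableAt ℂ φ₁ p)
    (hd₂ : ∀ p ∈ G, DifferentiableAt ℂ φ₂ p)
    (hcr₁ : ∀ p ∈ G, fderiv ℂ φ₁ p (1, 0) = fderiv ℂ φ₂ p (0, 1))
    (hcr₂ : ∀ p ∈ G, fderiv ℂ φ₂ p (1, 0) = -fderiv ℂ φ₁ p (0, 1)) :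
    ∀ n : ℕ, ∀ p ∈ G,
      DifferentiableAt ℂ (Da^[n] φ₁) p ∧ DifferentiableAt ℂ (Da^[n] φ₂) p ∧
      fderiv ℂ (Da^[n] φ₁) p (1, 0) = fderiv ℂ (Da^[n] φ₂) p (0, 1) ∧
      fderiv ℂ (Da^[n] φ₂) p (1, 0) = -fderiv ℂ (Da^[n] φ₁) p (0, 1) := by
  intro n
  induction n generalizing φ₁ φ₂ with
  | zero =>
    intro p hp
    exact ⟨hd₁ p hp, hd₂ p hp, hcr₁ p hp, hcr₂ p hp⟩
  | succ n ih =>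
    obtain ⟨h1, h2, h3, h4⟩ := CR_step G hG φ₁ φ₂ hd₁ hd₂ hcr₁ hcr₂
    intro p hp
    have := ih (Da φ₁) (Da φ₂) h1 h2 h3 h4 p hp
    simpa [Function.iterate_succ_apply] using this
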